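/- For a qubit density matrix with eigenvalues x and 1-x (0 ≤ x ≤ 1), the von Neumann entropy satisfies -x·log x - (1-x)·log(1-x) ≤ 2·(log 2)·√(x(1-x)). -/

import Mathlib

open Real Finset

/-- `log u ≤ u / e`. -/
private lemma fg_log_le_div_e {u : ℝ} (hu : 0 < u) : Real.log u ≤ u / Real.exp 1 := by
  have h := Real.log_le_sub_one_of_pos (show 0 < u / Real.exp 1 by positivity)
  rw [Real.log_div (ne_of_gt hu) (by positivity), Real.log_exp] at h
  linarith

/-- `-x log x ≤ (2/e) √x` for `0 < x`. -/
private lemma fg_neg_mul_log_le_sqrt {x : ℝ} (hx : 0 < x) :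
    -x * Real.log x ≤ (2 / Real.exp 1) * Real.sqrt x := by
  have ht : 0 < Real.sqrt x := Real.sqrt_pos.2 hx
  have hx' : x = Real.sqrt x ^ 2 := (Real.sq_sqrt hx.le).symm
  have hlog : Real.log x = 2 * Real.log (Real.sqrt x) := by
    rw [hx', Real.log_pow]; push_cast; ring_nf
    rw [Real.sq_sqrt hx.le]
  have h1 : Real.log (1 / Real.sqrt x) ≤ (1 / Real.sqrt x) / Real.exp 1 :=
    fg_log_le_div_e (by positivity)
  rw [Real.log_div one_ne_zero (ne_of_gt ht), Real.log_one] at h1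
  have he : 0 < Real.exp 1 := Real.exp_pos 1
  rw [hlog]
  nth_rewrite 1 [hx']
  have := mul_le_mul_of_nonneg_left h1 (by positivity : (0:ℝ) ≤ 2 * Real.sqrt x ^ 2)
  calc -Real.sqrt x ^ 2 * (2 * Real.log (Real.sqrt x))
      = 2 * Real.sqrt x ^ 2 * (0 - Real.log (Real.sqrt x)) := by ring
    _ ≤ 2 * Real.sqrt x ^ 2 * ((1 / Real.sqrt x) / Real.exp 1) := this
    _ = (2 / Real.exp 1) * (Real.sqrt x ^ 2 / Real.sqrt x) := by ring
    _ = (2 / Real.exp 1) * Real.sqrt x := by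
        rw [sq, mul_div_assoc, div_self (ne_of_gt ht), mul_one]

/-- Taylor-type bound: `-(1-x) log (1-x) ≤ x - x²/2` for `0 ≤ x ≤ 1/4`. -/
private lemma fg_lemA1 {x : ℝ} (h0 : 0 ≤ x) (h1 : x ≤ 1/4) :
    -(1 - x) * Real.log (1 - x) ≤ x - x^2/2 := by
  have habs : |x| < 1 := by rw [abs_of_nonneg h0]; linarith
  have h := Real.abs_log_sub_add_sum_range_le habs 3
  rw [abs_of_nonneg h0] at h
  have hsum : (∑ i ∈ Finset.range 3, x ^ (i + 1) / (i + 1))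
      = x + x^2/2 + x^3/3 := by
    simp [Finset.sum_range_succ]
    ring
  rw [hsum] at h
  have hx1 : (0:ℝ) < 1 - x := by linarith
  have hb : Real.log (1 - x) ≥ -(x + x^2/2 + x^3/3) - x^4/(1-x) := by
    have := abs_le.1 h
    have h4 : x^(3+1) = x^4 := by ring
    rw [h4] at this
    linarith [this.1]
  have key : -(1 - x) * Real.log (1 - x)
      ≤ (1-x) * (x + x^2/2 + x^3/3) + x^4 := by
    have := mul_le_mul_of_nonneg_left (neg_le_neg hb) hx1.le
    have hh : (1-x) * (x^4/(1-x)) = x^4 := by field_simp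
    nlinarith [this]
  nlinarith [key, pow_nonneg h0 3]

/-- Lower bound for `φ(s) = (1+s)log(1+s) + (1-s)log(1-s)` on `[0, 1/2]`. -/
private lemma fg_phi_lower {s : ℝ} (h0 : 0 ≤ s) (h1 : s ≤ 1/2) :
    s^2 + s^4/6 + s^6/15 - 2*s^7/(1-s)
      ≤ (1+s) * Real.log (1+s) + (1-s) * Real.log (1-s) := by
  have habs : |s| < 1 := by rw [abs_of_nonneg h0]; linarith
  have habs' : |(-s)| < 1 := by rwa [abs_neg]
  have hm := Real.abs_log_sub_add_sum_range_le habs 6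
  have hp := Real.abs_log_sub_add_sum_range_le habs' 6
  rw [abs_of_nonneg h0] at hm
  rw [abs_neg, abs_of_nonneg h0] at hp
  have hs1 : (0:ℝ) < 1 - s := by linarith
  have hsumm : (∑ i ∈ Finset.range 6, s ^ (i + 1) / (i + 1))
      = s + s^2/2 + s^3/3 + s^4/4 + s^5/5 + s^6/6 := by
    simp [Finset.sum_range_succ]; ring
  have hsump : (∑ i ∈ Finset.range 6, (-s) ^ (i + 1) / (i + 1))
      = -s + s^2/2 - s^3/3 + s^4/4 - s^5/5 + s^6/6 := by
    simp [Finset.sum_range_succ]; ring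
  rw [hsumm] at hm
  rw [hsump] at hp
  have h7 : s^(6+1) = s^7 := by ring
  rw [h7] at hm hp
  have hsub : (1:ℝ) - -s = 1 + s := by ring
  rw [hsub] at hp
  have hlm : Real.log (1-s) ≥ -(s + s^2/2 + s^3/3 + s^4/4 + s^5/5 + s^6/6) - s^7/(1-s) := by
    linarith [(abs_le.1 hm).1]
  have hlp : Real.log (1+s) ≥ (s - s^2/2 + s^3/3 - s^4/4 + s^5/5 - s^6/6) - s^7/(1-s) := by
    have := (abs_le.1 hp).1
    linarith
  have e1 : (0:ℝ) ≤ 1 + s := by linarith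
  have c1 := mul_le_mul_of_nonneg_left hlp e1
  have c2 := mul_le_mul_of_nonneg_left hlm hs1.le
  have hfrac : (1-s) * (s^7/(1-s)) = s^7 := by field_simp
  have hfrac2 : (1+s) * (s^7/(1-s)) + (1-s) * (s^7/(1-s)) = 2*s^7/(1-s) := by
    field_simp; ring
  nlinarith [c1, c2]

/-- Polynomial core inequality on `[0, 1/2]`. -/
private lemma fg_polyB {s : ℝ} (h0 : 0 ≤ s) (h1 : s ≤ 1/2) :
    2 * Real.log 2 * s^2 / (2 - s^2)
      ≤ s^2 + s^4/6 + s^6/15 - 2*s^7/(1-s) := by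
  have hl : Real.log 2 < 0.6931471808 := Real.log_two_lt_d9
  have hl0 : 0 < Real.log 2 := Real.log_pos (by norm_num)
  have hs1 : (0:ℝ) < 1 - s := by linarith
  have hs2 : (0:ℝ) < 2 - s^2 := by nlinarith
  rw [div_le_iff₀ hs2]
  have key : 2 * (0.6931471808 : ℝ) * s^2 ≤ (s^2 + s^4/6 + s^6/15 - 2*s^7/(1-s)) * (2 - s^2) := by
    rw [← sub_nonneg]
    have expand : (s^2 + s^4/6 + s^6/15 - 2*s^7/(1-s)) * (2 - s^2) - 2 * (0.6931471808:ℝ) * s^2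
        = (s^2*(2-s^2)*(1-s)*(1 + 1/6*s^2 + 1/15*s^4) - 2*s^7*(2-s^2)
            - 2*(0.6931471808:ℝ)*s^2*(1-s)) / (1-s) := by
      field_simp
    rw [expand]
    apply div_nonneg _ hs1.le
    nlinarith [sq_nonneg s, sq_nonneg (s-1/2), sq_nonneg (s*(s-1/2)), pow_nonneg h0 3,
      pow_nonneg h0 5, pow_nonneg h0 7, sq_nonneg (s^2*(s-1/2)), sq_nonneg (s^3*(s-1/2))]
  nlinarith [key, sq_nonneg s]

/-- `(2-2w)/(2-w) ≤ √(1-w)` for `w ≤ 1`. -/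
private lemma fg_sqrt_lb {w : ℝ} (h1 : w ≤ 1) :
    (2 - 2*w) / (2 - w) ≤ Real.sqrt (1 - w) := by
  have h2 : (0:ℝ) < 2 - w := by linarith
  rw [Real.le_sqrt (by apply div_nonneg <;> linarith) (by linarith : (0:ℝ) ≤ 1 - w)]
  rw [div_pow, div_le_iff₀ (by positivity)]
  nlinarith [sq_nonneg w, sq_nonneg (w*(1-w))]

/-- Region A: `0 < x ≤ 1/4`. -/
private lemma fg_regionA {x : ℝ} (h0 : 0 < x) (h1 : x ≤ 1/4) :
    -x * Real.log x - (1 - x) * Real.log (1 - x) ≤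
      2 * Real.log 2 * Real.sqrt (x * (1 - x)) := by
  have hA1 := fg_lemA1 h0.le h1
  have hA2 := fg_neg_mul_log_le_sqrt h0
  set t := Real.sqrt x with ht
  have ht0 : 0 ≤ t := Real.sqrt_nonneg x
  have ht2 : t^2 = x := Real.sq_sqrt h0.le
  have ht12 : t ≤ 1/2 := by
    rw [ht]
    have : Real.sqrt x ≤ Real.sqrt (1/4) := Real.sqrt_le_sqrt h1
    rwa [show (1/4:ℝ) = (1/2)^2 by norm_num,
      Real.sqrt_sq (by norm_num : (0:ℝ) ≤ 1/2)] at this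
  have hsplit : Real.sqrt (x * (1-x)) = t * Real.sqrt (1-x) := by
    rw [ht, Real.sqrt_mul h0.le]
  have hsq3 : Real.sqrt 3 * (1/2) ≤ Real.sqrt (1 - x) := by
    have h34 : Real.sqrt (3/4) ≤ Real.sqrt (1-x) := Real.sqrt_le_sqrt (by linarith)
    have : Real.sqrt (3/4) = Real.sqrt 3 * (1/2) := by
      rw [show (3/4:ℝ) = 3 * (1/2)^2 by norm_num, Real.sqrt_mul (by norm_num : (0:ℝ) ≤ 3),
        Real.sqrt_sq (by norm_num : (0:ℝ) ≤ 1/2)]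
    linarith
  have hl0 : (0:ℝ) < Real.log 2 := Real.log_pos (by norm_num)
  have hrhs : Real.sqrt 3 * Real.log 2 * t ≤ 2 * Real.log 2 * Real.sqrt (x * (1-x)) := by
    rw [hsplit]
    have := mul_le_mul_of_nonneg_left hsq3 (by positivity : (0:ℝ) ≤ 2 * Real.log 2 * t)
    calc Real.sqrt 3 * Real.log 2 * t = 2 * Real.log 2 * t * (Real.sqrt 3 * (1/2)) := by ring
      _ ≤ 2 * Real.log 2 * t * Real.sqrt (1-x) := this
      _ = 2 * Real.log 2 * (t * Real.sqrt (1-x)) := by ring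
  have he : (2.7182818283 : ℝ) < Real.exp 1 := Real.exp_one_gt_d9
  have he0 : (0:ℝ) < Real.exp 1 := Real.exp_pos 1
  have hediv : 2 / Real.exp 1 ≤ 0.7357589 := by
    rw [div_le_iff₀ he0]
    nlinarith
  have hsq3' : (1.732 : ℝ) ≤ Real.sqrt 3 := by
    rw [show (1.732:ℝ) = Real.sqrt (1.732^2) from
      (Real.sqrt_sq (by norm_num : (0:ℝ) ≤ 1.732)).symm]
    exact Real.sqrt_le_sqrt (by norm_num)
  have hl1 : (0.6931471803 : ℝ) < Real.log 2 := Real.log_two_gt_d9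
  have hcub : t - t^3/2 ≤ 7/16 := by nlinarith [sq_nonneg (t - 1/2)]
  have hmain : (2 / Real.exp 1) * t + (x - x^2/2) ≤ Real.sqrt 3 * Real.log 2 * t := by
    have hx2 : x - x^2/2 = t^2 - t^4/2 := by rw [← ht2]; ring
    rw [hx2]
    have hfac : t^2 - t^4/2 = t * (t - t^3/2) := by ring
    rw [hfac]
    have h1' : (2 / Real.exp 1) * t + t * (t - t^3/2) ≤ 0.7357589 * t + t * (7/16) := by
      have := mul_le_mul_of_nonneg_right hediv ht0
      have := mul_le_mul_of_nonneg_left hcub ht0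
      linarith
    have h2' : (0.7357589 : ℝ) * t + t * (7/16) ≤ Real.sqrt 3 * Real.log 2 * t := by
      have hc : (0.7357589 : ℝ) + 7/16 ≤ Real.sqrt 3 * Real.log 2 := by
        nlinarith
      nlinarith [mul_le_mul_of_nonneg_right hc ht0]
    linarith
  linarith

/-- Region B: `1/4 ≤ x ≤ 1/2`. -/
private lemma fg_regionB {x : ℝ} (h1 : 1/4 ≤ x) (h2 : x ≤ 1/2) :
    -x * Real.log x - (1 - x) * Real.log (1 - x) ≤
      2 * Real.log 2 * Real.sqrt (x * (1 - x)) := by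
  set s := 1 - 2*x with hs
  have hs0 : 0 ≤ s := by simp only [hs]; linarith
  have hs12 : s ≤ 1/2 := by simp only [hs]; linarith
  have hx : x = (1 - s)/2 := by simp only [hs]; ring
  have hpos1 : (0:ℝ) < 1 - s := by linarith
  have hpos2 : (0:ℝ) < 1 + s := by linarith
  have hlogx : Real.log x = Real.log (1 - s) - Real.log 2 := by
    rw [hx, Real.log_div (ne_of_gt hpos1) two_ne_zero]
  have hlog1x : Real.log (1 - x) = Real.log (1 + s) - Real.log 2 := by
    rw [show 1 - x = (1 + s)/2 by simp only [hs]; ring,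
      Real.log_div (ne_of_gt hpos2) two_ne_zero]
  have hphi' := le_trans (fg_polyB hs0 hs12) (fg_phi_lower hs0 hs12)
  set l := Real.log 2 with hl
  have hl0 : (0:ℝ) < l := Real.log_pos (by norm_num)
  have hLHS : -x * Real.log x - (1 - x) * Real.log (1 - x)
      = l - ((1+s) * Real.log (1+s) + (1-s) * Real.log (1-s))/2 := by
    rw [hlogx, hlog1x, hx]; ring
  have hw : s^2 ≤ 1 := by nlinarith
  have hw2 : (0:ℝ) < 2 - s^2 := by nlinarith
  have step1 : -x * Real.log x - (1 - x) * Real.log (1 - x)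
      ≤ l * ((2 - 2*s^2) / (2 - s^2)) := by
    rw [hLHS]
    have heq : l - (2 * l * s^2 / (2 - s^2))/2 = l * ((2 - 2*s^2) / (2 - s^2)) := by
      field_simp; ring
    linarith [heq ▸ (by linarith [hphi'] :
      l - ((1+s) * Real.log (1+s) + (1-s) * Real.log (1-s))/2
        ≤ l - (2 * l * s^2 / (2 - s^2))/2)]
  have step2 : l * ((2 - 2*s^2) / (2 - s^2)) ≤ l * Real.sqrt (1 - s^2) :=
    mul_le_mul_of_nonneg_left (fg_sqrt_lb hw) hl0.le
  have hRHS : Real.sqrt (x * (1 - x)) = Real.sqrt (1 - s^2) / 2 := by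
    rw [hx, show (1-s)/2 * (1 - (1-s)/2) = (1 - s^2) * (1/2)^2 by ring,
      Real.sqrt_mul (by nlinarith : (0:ℝ) ≤ 1 - s^2),
      Real.sqrt_sq (by norm_num : (0:ℝ) ≤ 1/2)]
    ring
  rw [hRHS]
  calc -x * Real.log x - (1 - x) * Real.log (1 - x)
      ≤ l * Real.sqrt (1 - s^2) := le_trans step1 step2
    _ = 2 * l * (Real.sqrt (1 - s^2) / 2) := by ring

/-- The inequality on `[0, 1/2]`. -/
private lemma fg_half {x : ℝ} (h0 : 0 ≤ x) (h2 : x ≤ 1/2) :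
    -x * Real.log x - (1 - x) * Real.log (1 - x) ≤
      2 * Real.log 2 * Real.sqrt (x * (1 - x)) := by
  rcases eq_or_lt_of_le h0 with h | h
  · simp [← h]
  · rcases le_or_gt x (1/4) with h14 | h14
    · exact fg_regionA h h14
    · exact fg_regionB h14.le h2

theorem fuchs_graaf_qubit (x : ℝ) (hx0 : 0 ≤ x) (hx1 : x ≤ 1) :
    -x * Real.log x - (1 - x) * Real.log (1 - x) ≤
      2 * Real.log 2 * Real.sqrt (x * (1 - x)) := by
  rcases le_or_gt x (1/2) with h | h
  · exact fg_half hx0 h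
  · have := fg_half (by linarith : (0:ℝ) ≤ 1 - x) (by linarith : 1 - x ≤ 1/2)
    rw [show (1:ℝ) - (1 - x) = x by ring] at this
    rw [show (1 - x) * x = x * (1 - x) by ring] at this
    linarith
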